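/- A formula φ is valid in the internal logic of the topos of trees (i.e., forced at every positive integer under every ω-valuation in the ω-semantics) if and only if φ is LC⊳-valid (forced at every world of every LC⊳-model). -/
import Mathlib


/-- Formulas: atoms, ⊤, ⊥, ∧, ∨, →, irreflexive implication ⊳ (`iimp`), later ▷ (`later`). -/
inductive Fm : Type where
  | atom : ℕ → Fm
  | top : Fm
  | bot : Fm
  | and : Fm → Fm → Fm
  | or : Fm → Fm → Fm
  | imp : Fm → Fm → Fm
  | iimp : Fm → Fm → Fm
  | later : Fm → Fm
deriving DecidableEq

/-- A KM-model: nonempty set of worlds, transitive converse-well-founded relation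
(no infinite ascending chain), persistent valuation of atoms. -/
structure KMModel where
  W : Type
  nonempty : Nonempty W
  R : W → W → Prop
  trans : ∀ {x y z}, R x y → R y z → R x z
  cwf : ¬ ∃ f : ℕ → W, ∀ n, R (f n) (f (n + 1))
  val : ℕ → W → Prop
  persist : ∀ p {w x}, val p w → R w x → val p x

/-- Kripke forcing in a KM-model. -/
def KMModel.force (M : KMModel) : Fm → M.W → Prop
  | .atom p, w => M.val p w
  | .top, _ => True
  | .bot, _ => False
  | .and a b, w => M.force a w ∧ M.force b w
  | .or a b, w => M.force a w ∨ M.force b w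
  | .imp a b, w => ∀ x, (w = x ∨ M.R w x) → M.force a x → M.force b x
  | .iimp a b, w => ∀ x, M.R w x → M.force a x → M.force b x
  | .later a, w => ∀ x, M.R w x → M.force a x

/-- An LC⊳-model is a KM-model whose relation is moreover connected. -/
structure LCModel extends KMModel where
  conn : ∀ x y : W, x = y ∨ R x y ∨ R y x

/-- KM-validity. -/
def KMValid (φ : Fm) : Prop :=
  ∀ (M : KMModel) (w : M.W), M.force φ w

/-- LC⊳-validity. -/
def LCValid (φ : Fm) : Prop :=
  ∀ (M : LCModel) (w : M.W), M.toKMModel.force φ w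

/-- ω-semantics forcing (worlds are positive integers). -/
def wforce (η : ℕ → ℕ+ → Prop) : Fm → ℕ+ → Prop
  | .atom p, j => η p j
  | .top, _ => True
  | .bot, _ => False
  | .and a b, j => wforce η a j ∧ wforce η b j
  | .or a b, j => wforce η a j ∨ wforce η b j
  | .imp a b, j => ∀ k ≤ j, wforce η a k → wforce η b k
  | .iimp a b, j => ∀ k < j, wforce η a k → wforce η b k
  | .later a, j => ∀ k < j, wforce η a k

/-- `iimps G` is the set {γ ⊳ γ' | (γ,γ') ∈ G}. -/
def iimps (G : Finset (Fm × Fm)) : Finset Fm := G.image fun p => Fm.iimp p.1 p.2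

/-- `impsOf G` is the set {γ → γ' | (γ,γ') ∈ G}. -/
def impsOf (G : Finset (Fm × Fm)) : Finset Fm := G.image fun p => Fm.imp p.1 p.2

/-- `laters Θ` is the set {▷θ | θ ∈ Θ}. -/
def laters (Θ : Finset Fm) : Finset Fm := Θ.image Fm.later

def Fm.isAtom : Fm → Prop
  | .atom _ => True
  | _ => False

/-- The sequent calculus SC_LC⊳ on sequents of finite sets of formulas. -/
inductive DerivLC : Finset Fm → Finset Fm → Prop where
  | topR (Γ Δ) : DerivLC Γ (insert Fm.top Δ)
  | botL (Γ Δ) : DerivLC (insert Fm.bot Γ) Δ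
  | id (Γ Δ φ) : DerivLC (insert φ Γ) (insert φ Δ)
  | andL (Γ Δ φ ψ) : DerivLC (insert φ (insert ψ Γ)) Δ → DerivLC (insert (φ.and ψ) Γ) Δ
  | andR (Γ Δ φ ψ) : DerivLC Γ (insert φ Δ) → DerivLC Γ (insert ψ Δ) →
      DerivLC Γ (insert (φ.and ψ) Δ)
  | orL (Γ Δ φ ψ) : DerivLC (insert φ Γ) Δ → DerivLC (insert ψ Γ) Δ →
      DerivLC (insert (φ.or ψ) Γ) Δ
  | orR (Γ Δ φ ψ) : DerivLC Γ (insert φ (insert ψ Δ)) → DerivLC Γ (insert (φ.or ψ) Δ)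
  | impL (Γ Δ φ ψ) : DerivLC (insert (φ.iimp ψ) Γ) (insert φ Δ) →
      DerivLC (insert ψ (insert (φ.iimp ψ) Γ)) Δ →
      DerivLC (insert (φ.imp ψ) Γ) Δ
  | impR (Γ Δ φ ψ) : DerivLC (insert φ Γ) (insert ψ Δ) → DerivLC Γ (insert (φ.iimp ψ) Δ) →
      DerivLC Γ (insert (φ.imp ψ) Δ)
  | step (Sl Sr Θ Φ : Finset Fm) (G D : Finset (Fm × Fm)) :
      (∀ a ∈ Sl, a.isAtom) → (∀ a ∈ Sr, a.isAtom) →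
      Sl ∩ Sr = ∅ → Fm.bot ∉ Sl → Fm.top ∉ Sr →
      (D.Nonempty ∨ Φ.Nonempty) →
      (∀ pq ∈ D, DerivLC
          (Sl ∪ impsOf G ∪ Θ ∪ laters Θ ∪ ({Fm.iimp pq.1 pq.2, pq.1} : Finset Fm))
          (insert pq.2 ((impsOf D).erase (Fm.imp pq.1 pq.2) ∪ Φ))) →
      (∀ χ ∈ Φ, DerivLC
          (Sl ∪ Θ ∪ laters Θ ∪ impsOf G ∪ ({Fm.later χ} : Finset Fm))
          (impsOf D ∪ Φ)) →
      DerivLC (Sl ∪ laters Θ ∪ iimps G) (iimps D ∪ laters Φ ∪ Sr)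

/-- The sequent calculus SC_KM: same static rules, transitional rules (⊳R) and (▷R). -/
inductive DerivKM : Finset Fm → Finset Fm → Prop where
  | topR (Γ Δ) : DerivKM Γ (insert Fm.top Δ)
  | botL (Γ Δ) : DerivKM (insert Fm.bot Γ) Δ
  | id (Γ Δ φ) : DerivKM (insert φ Γ) (insert φ Δ)
  | andL (Γ Δ φ ψ) : DerivKM (insert φ (insert ψ Γ)) Δ → DerivKM (insert (φ.and ψ) Γ) Δ
  | andR (Γ Δ φ ψ) : DerivKM Γ (insert φ Δ) → DerivKM Γ (insert ψ Δ) →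
      DerivKM Γ (insert (φ.and ψ) Δ)
  | orL (Γ Δ φ ψ) : DerivKM (insert φ Γ) Δ → DerivKM (insert ψ Γ) Δ →
      DerivKM (insert (φ.or ψ) Γ) Δ
  | orR (Γ Δ φ ψ) : DerivKM Γ (insert φ (insert ψ Δ)) → DerivKM Γ (insert (φ.or ψ) Δ)
  | impL (Γ Δ φ ψ) : DerivKM (insert (φ.iimp ψ) Γ) (insert φ Δ) →
      DerivKM (insert ψ (insert (φ.iimp ψ) Γ)) Δ →
      DerivKM (insert (φ.imp ψ) Γ) Δ
  | impR (Γ Δ φ ψ) : DerivKM (insert φ Γ) (insert ψ Δ) → DerivKM Γ (insert (φ.iimp ψ) Δ) →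
      DerivKM Γ (insert (φ.imp ψ) Δ)
  | iimpR (Sl Sr Θ Φ : Finset Fm) (G D : Finset (Fm × Fm)) (φ ψ : Fm) :
      (∀ a ∈ Sl, a.isAtom) → (∀ a ∈ Sr, a.isAtom) →
      Sl ∩ Sr = ∅ → Fm.bot ∉ Sl → Fm.top ∉ Sr →
      DerivKM (Sl ∪ Θ ∪ laters Θ ∪ impsOf G ∪ ({Fm.iimp φ ψ, φ} : Finset Fm)) {ψ} →
      DerivKM (Sl ∪ laters Θ ∪ iimps G) (insert (Fm.iimp φ ψ) (iimps D ∪ laters Φ ∪ Sr))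
  | laterR (Sl Sr Θ Φ : Finset Fm) (G D : Finset (Fm × Fm)) (φ : Fm) :
      (∀ a ∈ Sl, a.isAtom) → (∀ a ∈ Sr, a.isAtom) →
      Sl ∩ Sr = ∅ → Fm.bot ∉ Sl → Fm.top ∉ Sr →
      DerivKM (Sl ∪ Θ ∪ laters Θ ∪ impsOf G ∪ ({Fm.later φ} : Finset Fm)) {φ} →
      DerivKM (Sl ∪ laters Θ ∪ iimps G) (insert (Fm.later φ) (iimps D ∪ laters Φ ∪ Sr))

/-- A sequent is refutable (over LC⊳-models) if some world of some LC⊳-model forces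
every antecedent formula and no succedent formula. -/
def RefutableLC (Γ Δ : Finset Fm) : Prop :=
  ∃ (M : LCModel) (w : M.W),
    (∀ γ ∈ Γ, M.toKMModel.force γ w) ∧ ∀ δ ∈ Δ, ¬ M.toKMModel.force δ w

/-- A sequent is refutable (over KM-models) if some world of some KM-model forces
every antecedent formula and no succedent formula. -/
def RefutableKM (Γ Δ : Finset Fm) : Prop :=
  ∃ (M : KMModel) (w : M.W),
    (∀ γ ∈ Γ, M.force γ w) ∧ ∀ δ ∈ Δ, ¬ M.force δ w

/-- Length of a formula: number of symbol occurrences. -/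
def Fm.len : Fm → ℕ
  | .atom _ => 1
  | .top => 1
  | .bot => 1
  | .and a b => a.len + b.len + 1
  | .or a b => a.len + b.len + 1
  | .imp a b => a.len + b.len + 1
  | .iimp a b => a.len + b.len + 1
  | .later a => a.len + 1

/-- An explicit numeric code for formulas. -/
def Fm.code : Fm → ℕ
  | .atom p => Nat.pair 0 p
  | .top => Nat.pair 1 0
  | .bot => Nat.pair 2 0
  | .and a b => Nat.pair 3 (Nat.pair a.code b.code)
  | .or a b => Nat.pair 4 (Nat.pair a.code b.code)
  | .imp a b => Nat.pair 5 (Nat.pair a.code b.code)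
  | .iimp a b => Nat.pair 6 (Nat.pair a.code b.code)
  | .later a => Nat.pair 7 a.code

/-- Formulas with no ⊳ and no ▷. -/
def Fm.noModal : Fm → Prop
  | .atom _ => True
  | .top => True
  | .bot => True
  | .and a b => a.noModal ∧ b.noModal
  | .or a b => a.noModal ∧ b.noModal
  | .imp a b => a.noModal ∧ b.noModal
  | .iimp _ _ => False
  | .later _ => False

/-- Classical Boolean evaluation (junk values on the modal connectives). -/
def Fm.beval (v : ℕ → Bool) : Fm → Bool
  | .atom p => v p
  | .top => true
  | .bot => false
  | .and a b => a.beval v && b.beval v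
  | .or a b => a.beval v || b.beval v
  | .imp a b => !(a.beval v) || b.beval v
  | .iimp _ _ => false
  | .later _ => false


section AuxProof

attribute [local instance] Classical.propDecidable

/-- Subformula closure. -/
def subf : Fm → Finset Fm
  | .atom p => {.atom p}
  | .top => {.top}
  | .bot => {.bot}
  | .and a b => insert (.and a b) (subf a ∪ subf b)
  | .or a b => insert (.or a b) (subf a ∪ subf b)
  | .imp a b => insert (.imp a b) (subf a ∪ subf b)
  | .iimp a b => insert (.iimp a b) (subf a ∪ subf b)
  | .later a => insert (.later a) (subf a)

lemma subf_self (ψ : Fm) : ψ ∈ subf ψ := by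
  cases ψ <;> simp [subf]

lemma subf_trans {ψ χ : Fm} (h : ψ ∈ subf χ) : subf ψ ⊆ subf χ := by
  induction χ with
  | atom p => simp [subf] at h; subst h; simp [subf]
  | top => simp [subf] at h; subst h; simp [subf]
  | bot => simp [subf] at h; subst h; simp [subf]
  | and a b iha ihb =>
      rcases Finset.mem_insert.1 h with rfl | h'
      · exact subset_rfl
      · rcases Finset.mem_union.1 h' with h'' | h''
        · exact (iha h'').trans ((Finset.subset_union_left).trans (Finset.subset_insert _ _))
        · exact (ihb h'').trans ((Finset.subset_union_right).trans (Finset.subset_insert _ _))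
  | or a b iha ihb =>
      rcases Finset.mem_insert.1 h with rfl | h'
      · exact subset_rfl
      · rcases Finset.mem_union.1 h' with h'' | h''
        · exact (iha h'').trans ((Finset.subset_union_left).trans (Finset.subset_insert _ _))
        · exact (ihb h'').trans ((Finset.subset_union_right).trans (Finset.subset_insert _ _))
  | imp a b iha ihb =>
      rcases Finset.mem_insert.1 h with rfl | h'
      · exact subset_rfl
      · rcases Finset.mem_union.1 h' with h'' | h''
        · exact (iha h'').trans ((Finset.subset_union_left).trans (Finset.subset_insert _ _))
        · exact (ihb h'').trans ((Finset.subset_union_right).trans (Finset.subset_insert _ _))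
  | iimp a b iha ihb =>
      rcases Finset.mem_insert.1 h with rfl | h'
      · exact subset_rfl
      · rcases Finset.mem_union.1 h' with h'' | h''
        · exact (iha h'').trans ((Finset.subset_union_left).trans (Finset.subset_insert _ _))
        · exact (ihb h'').trans ((Finset.subset_union_right).trans (Finset.subset_insert _ _))
  | later a iha =>
      rcases Finset.mem_insert.1 h with rfl | h'
      · exact subset_rfl
      · exact (iha h').trans (Finset.subset_insert _ _)

lemma force_persist (M : KMModel) (ψ : Fm) :
    ∀ {x y : M.W}, M.R x y → M.force ψ x → M.force ψ y := by
  induction ψ with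
  | atom p => exact fun h hp => M.persist p hp h
  | top => intro x y _ _; trivial
  | bot => intro x y _ hf; exact hf.elim
  | and a b iha ihb => exact fun h hf => ⟨iha h hf.1, ihb h hf.2⟩
  | or a b iha ihb =>
      intro x y h hf
      rcases hf with hf | hf
      · exact Or.inl (iha h hf)
      · exact Or.inr (ihb h hf)
  | imp a b iha ihb =>
      intro x y h hf z hz haz
      rcases hz with rfl | hz
      · exact hf _ (Or.inr h) haz
      · exact hf z (Or.inr (M.trans h hz)) haz
  | iimp a b iha ihb =>
      intro x y h hf z hz haz
      exact hf z (M.trans h hz) haz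
  | later a iha =>
      intro x y h hf z hz
      exact hf z (M.trans h hz)

section Tower

variable (M : LCModel) (w : M.W) (S : Finset Fm)

def Fut : Set M.W := {x | x = w ∨ M.R w x}

lemma w_mem_Fut : w ∈ Fut M w := Or.inl rfl

lemma Fut_up {x y : M.W} (hx : x ∈ Fut M w) (h : M.R x y) : y ∈ Fut M w := by
  rcases hx with rfl | hx
  · exact Or.inr h
  · exact Or.inr (M.trans hx h)

noncomputable def Th (x : M.W) : Finset Fm := S.filter (fun ψ => M.toKMModel.force ψ x)

lemma mem_Th {ψ : Fm} {x : M.W} :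
    ψ ∈ Th M S x ↔ ψ ∈ S ∧ M.toKMModel.force ψ x := Finset.mem_filter

lemma Th_mono {x y : M.W} (h : M.R x y) : Th M S x ⊆ Th M S y := fun ψ hψ =>
  (mem_Th M S).2 ⟨((mem_Th M S).1 hψ).1, force_persist _ ψ h ((mem_Th M S).1 hψ).2⟩

lemma Th_w_le {x : M.W} (hx : x ∈ Fut M w) : Th M S w ⊆ Th M S x := by
  rcases hx with rfl | h
  · exact subset_rfl
  · exact Th_mono M S h

lemma maxEx (A : Set M.W) (hA : A.Nonempty) : ∃ m, m ∈ A ∧ ∀ x ∈ A, ¬ M.R m x := by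
  by_contra hc
  push_neg at hc
  choose f hfA hfR using hc
  obtain ⟨a, ha⟩ := hA
  let g : ℕ → {x : M.W // x ∈ A} :=
    fun n => Nat.rec ⟨a, ha⟩ (fun _ p => ⟨f p.1 p.2, hfA p.1 p.2⟩) n
  exact M.cwf ⟨fun n => (g n).1, fun n => hfR (g n).1 (g n).2⟩

noncomputable def ytop : {x : M.W // x ∈ Fut M w} :=
  ⟨(maxEx M (Fut M w) ⟨w, w_mem_Fut M w⟩).choose,
    (maxEx M (Fut M w) ⟨w, w_mem_Fut M w⟩).choose_spec.1⟩

lemma ytop_max : ∀ x ∈ Fut M w, ¬ M.R (ytop M w).1 x :=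
  (maxEx M (Fut M w) ⟨w, w_mem_Fut M w⟩).choose_spec.2

noncomputable def ystep (x : {x : M.W // x ∈ Fut M w}) : {x : M.W // x ∈ Fut M w} :=
  if hT : Th M S x.1 = Th M S w then x
  else
    have hne : ({z | z ∈ Fut M w ∧ Th M S z ⊂ Th M S x.1} : Set M.W).Nonempty :=
      ⟨w, w_mem_Fut M w, Finset.ssubset_iff_subset_ne.2 ⟨Th_w_le M w S x.2, Ne.symm hT⟩⟩
    ⟨(maxEx M _ hne).choose, (maxEx M _ hne).choose_spec.1.1⟩

lemma ystep_spec (x : {x : M.W // x ∈ Fut M w}) :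
    (Th M S x.1 = Th M S w ∧ ystep M w S x = x) ∨
    (Th M S x.1 ≠ Th M S w ∧ Th M S (ystep M w S x).1 ⊂ Th M S x.1 ∧
      ∀ z ∈ Fut M w, Th M S z ⊂ Th M S x.1 → ¬ M.R (ystep M w S x).1 z) := by
  by_cases hT : Th M S x.1 = Th M S w
  · exact Or.inl ⟨hT, by simp [ystep, hT]⟩
  · right
    have hne : ({z | z ∈ Fut M w ∧ Th M S z ⊂ Th M S x.1} : Set M.W).Nonempty :=
      ⟨w, w_mem_Fut M w, Finset.ssubset_iff_subset_ne.2 ⟨Th_w_le M w S x.2, Ne.symm hT⟩⟩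
    refine ⟨hT, ?_, ?_⟩
    · simp only [ystep, dif_neg hT]
      exact (maxEx M {z | z ∈ Fut M w ∧ Th M S z ⊂ Th M S x.1} hne).choose_spec.1.2
    · intro z hz hzt
      simp only [ystep, dif_neg hT]
      exact fun hR =>
        (maxEx M {z | z ∈ Fut M w ∧ Th M S z ⊂ Th M S x.1} hne).choose_spec.2 z ⟨hz, hzt⟩ hR

noncomputable def yy : ℕ → {x : M.W // x ∈ Fut M w}
  | 0 => ytop M w
  | k+1 => ystep M w S (yy k)

lemma yy_zero_max : ∀ x, ¬ M.R (yy M w S 0).1 x := by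
  intro x hx
  exact ytop_max M w x (Fut_up M w (yy M w S 0).2 hx) hx

lemma Th_yy_succ (k : ℕ) : Th M S (yy M w S (k+1)).1 ⊆ Th M S (yy M w S k).1 := by
  rcases ystep_spec M w S (yy M w S k) with ⟨_, h⟩ | ⟨_, h, _⟩
  · show Th M S (ystep M w S (yy M w S k)).1 ⊆ _
    rw [h]
  · exact subset_of_ssubset h

lemma Th_yy_mono {k k' : ℕ} (h : k ≤ k') :
    Th M S (yy M w S k').1 ⊆ Th M S (yy M w S k).1 := by
  induction h with
  | refl => exact subset_rfl
  | step h ih => exact (Th_yy_succ M w S _).trans ih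

lemma yy_max (k : ℕ) : ∀ x, M.R (yy M w S k).1 x → Th M S x ≠ Th M S (yy M w S k).1 := by
  induction k with
  | zero => intro x hx; exact absurd hx (yy_zero_max M w S x)
  | succ n ih =>
      have hy : yy M w S (n+1) = ystep M w S (yy M w S n) := rfl
      rcases ystep_spec M w S (yy M w S n) with ⟨_, h⟩ | ⟨_, hss, hmax⟩
      · rw [hy, h]; exact ih
      · intro x hx heq
        rw [hy] at hx heq
        refine hmax x (Fut_up M w (ystep M w S (yy M w S n)).2 hx) ?_ hx
        rw [heq]; exact hss

lemma Th_yy_strict (k : ℕ) (h : Th M S (yy M w S k).1 ≠ Th M S w) :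
    Th M S (yy M w S (k+1)).1 ⊂ Th M S (yy M w S k).1 := by
  rcases ystep_spec M w S (yy M w S k) with ⟨h1, _⟩ | ⟨_, hss, _⟩
  · exact absurd h1 h
  · exact hss

lemma yy_stab (k : ℕ) (h : Th M S (yy M w S k).1 = Th M S w) :
    yy M w S (k+1) = yy M w S k := by
  rcases ystep_spec M w S (yy M w S k) with ⟨_, h2⟩ | ⟨h1, _, _⟩
  · exact h2
  · exact absurd h h1

lemma exN : ∃ k, Th M S (yy M w S k).1 = Th M S w := by
  have key : ∀ k, Th M S (yy M w S k).1 = Th M S w ∨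
      (Th M S (yy M w S k).1).card + k ≤ (Th M S (yy M w S 0).1).card := by
    intro k
    induction k with
    | zero => exact Or.inr (by omega)
    | succ n ih =>
        by_cases hT : Th M S (yy M w S n).1 = Th M S w
        · left; rw [yy_stab M w S n hT]; exact hT
        · right
          have hlt := Finset.card_lt_card (Th_yy_strict M w S n hT)
          rcases ih with h | h
          · exact absurd h hT
          · omega
  rcases key ((Th M S (yy M w S 0).1).card + 1) with h | h
  · exact ⟨_, h⟩
  · omega

end Tower


lemma subf_and {a b x : Fm} (h : Fm.and a b ∈ subf x) : a ∈ subf x ∧ b ∈ subf x :=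
  ⟨subf_trans h (by simp [subf, subf_self]), subf_trans h (by simp [subf, subf_self])⟩

lemma subf_or {a b x : Fm} (h : Fm.or a b ∈ subf x) : a ∈ subf x ∧ b ∈ subf x :=
  ⟨subf_trans h (by simp [subf, subf_self]), subf_trans h (by simp [subf, subf_self])⟩

lemma subf_imp {a b x : Fm} (h : Fm.imp a b ∈ subf x) : a ∈ subf x ∧ b ∈ subf x :=
  ⟨subf_trans h (by simp [subf, subf_self]), subf_trans h (by simp [subf, subf_self])⟩

lemma subf_iimp {a b x : Fm} (h : Fm.iimp a b ∈ subf x) : a ∈ subf x ∧ b ∈ subf x :=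
  ⟨subf_trans h (by simp [subf, subf_self]), subf_trans h (by simp [subf, subf_self])⟩

lemma subf_later {a x : Fm} (h : Fm.later a ∈ subf x) : a ∈ subf x :=
  subf_trans h (by simp [subf, subf_self])

/-- The ω-chain as an LC⊳-model. -/
def omegaModel (η : ℕ → ℕ+ → Prop) (hcl : ∀ p (j k : ℕ+), k ≤ j → η p j → η p k) :
    LCModel where
  W := ℕ+
  nonempty := ⟨1⟩
  R := fun a b => b < a
  trans := fun h1 h2 => lt_trans h2 h1
  cwf := by
    rintro ⟨f, hf⟩
    have key : ∀ n, (f n : ℕ) + n ≤ (f 0 : ℕ) := by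
      intro n
      induction n with
      | zero => omega
      | succ m ih =>
          have h1 : (f (m+1) : ℕ) < (f m : ℕ) := by exact_mod_cast hf m
          omega
    have h1 := key ((f 0 : ℕ))
    have h2 : 0 < (f ((f 0 : ℕ)) : ℕ) := (f _).2
    omega
  val := fun p k => η p k
  persist := fun p {x y} hx hy => hcl p x y (le_of_lt hy) hx
  conn := by
    intro a b
    rcases lt_trichotomy a b with h | h | h
    · exact Or.inr (Or.inr h)
    · exact Or.inl h
    · exact Or.inr (Or.inl h)

lemma omegaModel_force (η : ℕ → ℕ+ → Prop) (hcl : ∀ p (j k : ℕ+), k ≤ j → η p j → η p k)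
    (ψ : Fm) : ∀ k : ℕ+, (omegaModel η hcl).toKMModel.force ψ k ↔ wforce η ψ k := by
  induction ψ with
  | atom p => intro k; exact Iff.rfl
  | top => intro k; exact Iff.rfl
  | bot => intro k; exact Iff.rfl
  | and a b iha ihb => intro k; exact and_congr (iha k) (ihb k)
  | or a b iha ihb => intro k; exact or_congr (iha k) (ihb k)
  | imp a b iha ihb =>
      intro k
      constructor
      · intro hf m hm ham
        refine (ihb m).1 (hf m ?_ ((iha m).2 ham))
        rcases eq_or_lt_of_le hm with h | h
        · exact Or.inl h.symm
        · exact Or.inr h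
      · intro hf m hm ham
        refine (ihb m).2 (hf m ?_ ((iha m).1 ham))
        rcases hm with h | h
        · exact le_of_eq h.symm
        · exact le_of_lt h
  | iimp a b iha ihb =>
      intro k
      constructor
      · intro hf m hm ham
        exact (ihb m).1 (hf m hm ((iha m).2 ham))
      · intro hf m hm ham
        exact (ihb m).2 (hf m hm ((iha m).1 ham))
  | later a iha =>
      intro k
      constructor
      · intro hf m hm
        exact (iha m).1 (hf m hm)
      · intro hf m hm
        exact (iha m).2 (hf m hm)

lemma LC_to_omega (φ : Fm) (h : LCValid φ) :
    ∀ η : ℕ → ℕ+ → Prop,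
      (∀ p (j k : ℕ+), k ≤ j → η p j → η p k) → ∀ j : ℕ+, wforce η φ j := by
  intro η hcl j
  exact (omegaModel_force η hcl φ j).1 (h (omegaModel η hcl) j)


lemma omega_to_LC (φ : Fm)
    (h : ∀ η : ℕ → ℕ+ → Prop,
      (∀ p (j k : ℕ+), k ≤ j → η p j → η p k) → ∀ j : ℕ+, wforce η φ j) :
    LCValid φ := by
  classical
  intro M w
  -- the tower of representatives
  obtain ⟨N, hN, hNmin⟩ : ∃ N, Th M (subf φ) (yy M w (subf φ) N).1 = Th M (subf φ) w ∧
      ∀ k < N, Th M (subf φ) (yy M w (subf φ) k).1 ≠ Th M (subf φ) w :=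
    ⟨Nat.find (exN M w (subf φ)), Nat.find_spec (exN M w (subf φ)),
      fun k hk => Nat.find_min (exN M w (subf φ)) hk⟩
  set Y : ℕ → M.W := fun k => (yy M w (subf φ) k).1 with hYdef
  have hYF : ∀ k, Y k ∈ Fut M w := fun k => (yy M w (subf φ) k).2
  have hmono : ∀ {k k' : ℕ}, k ≤ k' → Th M (subf φ) (Y k') ⊆ Th M (subf φ) (Y k) :=
    fun h => Th_yy_mono M w (subf φ) h
  have hstrict : ∀ k k' : ℕ, k < k' → k' ≤ N → Th M (subf φ) (Y k') ⊂ Th M (subf φ) (Y k) := by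
    intro k k' hkk hk'N
    have h1 : Th M (subf φ) (Y (k+1)) ⊂ Th M (subf φ) (Y k) :=
      Th_yy_strict M w (subf φ) k (hNmin k (by omega))
    exact lt_of_le_of_lt (Finset.le_iff_subset.2 (hmono hkk)) (Finset.lt_iff_ssubset.2 h1)
  have hR : ∀ k k' : ℕ, k < k' → k' ≤ N → M.R (Y k') (Y k) := by
    intro k k' hkk hk'N
    have hss := hstrict k k' hkk hk'N
    rcases M.conn (Y k') (Y k) with he | hr | hr
    · rw [he] at hss; exact absurd (Finset.lt_iff_ssubset.2 hss) (lt_irrefl _)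
    · exact hr
    · exfalso
      obtain ⟨hsub, hne⟩ := Finset.ssubset_iff_subset_ne.1 hss
      exact hne (Finset.Subset.antisymm hsub (Th_mono M (subf φ) hr))
  have hweak : ∀ k k' : ℕ, k ≤ k' → k' ≤ N → Y k' = Y k ∨ M.R (Y k') (Y k) := by
    intro k k' hkk hk'N
    rcases eq_or_lt_of_le hkk with rfl | hlt
    · exact Or.inl rfl
    · exact Or.inr (hR k k' hlt hk'N)
  have hcover : ∀ x ∈ Fut M w, ∃ m, m ≤ N ∧ Th M (subf φ) x = Th M (subf φ) (Y m) := by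
    have h0 : ∀ x ∈ Fut M w, Th M (subf φ) x ⊆ Th M (subf φ) (Y 0) := by
      intro x hx
      rcases M.conn x (Y 0) with he | hr | hr
      · rw [he]
      · exact Th_mono M (subf φ) hr
      · exact absurd hr (yy_zero_max M w (subf φ) x)
    have key : ∀ n k, k + n = N → ∀ x ∈ Fut M w, Th M (subf φ) x ⊆ Th M (subf φ) (Y k) →
        ∃ m, m ≤ N ∧ Th M (subf φ) x = Th M (subf φ) (Y m) := by
      intro n
      induction n with
      | zero =>
          intro k hk x hx hsub
          have hkN : k = N := by omega
          subst hkN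
          refine ⟨k, le_rfl, Finset.Subset.antisymm hsub ?_⟩
          rw [hN]
          exact Th_w_le M w (subf φ) hx
      | succ n ih =>
          intro k hk x hx hsub
          by_cases heq : Th M (subf φ) x = Th M (subf φ) (Y k)
          · exact ⟨k, by omega, heq⟩
          · rcases ystep_spec M w (subf φ) (yy M w (subf φ) k) with ⟨h1, _⟩ | ⟨_, hss, hmax⟩
            · exact absurd h1 (hNmin k (by omega))
            · have hy1 : Y (k+1) = (ystep M w (subf φ) (yy M w (subf φ) k)).1 := rfl
              rcases M.conn x (Y (k+1)) with he | hr | hr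
              · exact ⟨k+1, by omega, by rw [he]⟩
              · exact ih (k+1) (by omega) x hx (Th_mono M (subf φ) hr)
              · exfalso
                rw [hy1] at hr
                exact hmax x hx (Finset.ssubset_iff_subset_ne.2 ⟨hsub, heq⟩) hr
    intro x hx
    exact key N 0 (by omega) x hx (h0 x hx)
  -- the ω-valuation
  set g : ℕ+ → M.W := fun j => Y (min ((j : ℕ) - 1) N) with hg
  set η : ℕ → ℕ+ → Prop := fun p j => M.val p (g j) with hη
  have gval : ∀ j : ℕ+, (j : ℕ) ≤ N + 1 → g j = Y ((j : ℕ) - 1) := by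
    intro j hj
    show Y (min ((j : ℕ) - 1) N) = Y ((j : ℕ) - 1)
    congr 1
    omega
  have ηcl : ∀ p (j k : ℕ+), k ≤ j → η p j → η p k := by
    intro p j k hkj hp
    have hco : (k : ℕ) ≤ (j : ℕ) := (PNat.coe_le_coe k j).2 hkj
    have h1 : min ((k : ℕ) - 1) N ≤ min ((j : ℕ) - 1) N :=
      min_le_min (Nat.sub_le_sub_right hco 1) le_rfl
    have hp' : M.val p (Y (min ((j : ℕ) - 1) N)) := hp
    rcases hweak _ _ h1 (min_le_right _ _) with he | hr
    · show M.val p (Y (min ((k : ℕ) - 1) N))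
      rw [← he]; exact hp'
    · exact M.persist p hp' hr
  have forceTh : ∀ ψ ∈ subf φ, ∀ x : M.W,
      M.toKMModel.force ψ x ↔ ψ ∈ Th M (subf φ) x := by
    intro ψ hψ x
    rw [mem_Th]
    exact ⟨fun hf => ⟨hψ, hf⟩, fun hh => hh.2⟩
  have sameTh : ∀ ψ ∈ subf φ, ∀ x z : M.W, Th M (subf φ) x = Th M (subf φ) z →
      (M.toKMModel.force ψ x ↔ M.toKMModel.force ψ z) := by
    intro ψ hψ x z hxz
    rw [forceTh ψ hψ x, forceTh ψ hψ z, hxz]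
  have gFut : ∀ j : ℕ+, g j ∈ Fut M w := by
    intro j
    simp only [hg]
    exact hYF _
  -- the key equivalence
  have main : ∀ ψ, ψ ∈ subf φ → ∀ j : ℕ+, (j : ℕ) ≤ N + 1 →
      (wforce η ψ j ↔ M.toKMModel.force ψ (g j)) := by
    intro ψ
    induction ψ with
    | atom p => intro _ j hj; exact Iff.rfl
    | top => intro _ j hj; exact Iff.rfl
    | bot => intro _ j hj; exact Iff.rfl
    | and a b iha ihb =>
        intro hmem j hj
        exact and_congr (iha (subf_and hmem).1 j hj) (ihb (subf_and hmem).2 j hj)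
    | or a b iha ihb =>
        intro hmem j hj
        exact or_congr (iha (subf_or hmem).1 j hj) (ihb (subf_or hmem).2 j hj)
    | imp a b iha ihb =>
        intro hmem j hj
        obtain ⟨ha, hb⟩ := subf_imp hmem
        constructor
        · intro H x hx hax
          rcases hx with hx | hx
          · have hax' : M.toKMModel.force a (g j) := by rw [hx]; exact hax
            have hb' := (ihb hb j hj).1 (H j le_rfl ((iha ha j hj).2 hax'))
            rw [← hx]; exact hb'
          · have hxF : x ∈ Fut M w := Fut_up M w (gFut j) hx
            obtain ⟨m, hmN, hTx⟩ := hcover x hxF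
            have hsub : Th M (subf φ) (Y ((j : ℕ) - 1)) ⊆ Th M (subf φ) x := by
              rw [← gval j hj]
              exact Th_mono M (subf φ) hx
            obtain ⟨m', hm'le, hTx'⟩ : ∃ m', m' ≤ (j : ℕ) - 1 ∧
                Th M (subf φ) x = Th M (subf φ) (Y m') := by
              rcases le_or_gt m ((j : ℕ) - 1) with hc | hc
              · exact ⟨m, hc, hTx⟩
              · refine ⟨(j : ℕ) - 1, le_rfl, Finset.Subset.antisymm ?_ hsub⟩
                rw [hTx]
                exact hmono (le_of_lt hc)
            have hm'N : m' ≤ N := by omega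
            have hkN : ((m'.succPNat : ℕ+) : ℕ) ≤ N + 1 := by
              rw [Nat.succPNat_coe]; omega
            have hkj : m'.succPNat ≤ j := by
              rw [← PNat.coe_le_coe, Nat.succPNat_coe]
              have hjpos : 0 < (j : ℕ) := j.2
              show m'.succ ≤ (j : ℕ)
              omega
            have hgk : g m'.succPNat = Y m' := by
              rw [gval _ hkN, Nat.succPNat_coe, Nat.succ_sub_one]
            have h3 : M.toKMModel.force a (g m'.succPNat) := by
              rw [hgk]
              exact (sameTh a ha x (Y m') hTx').1 hax
            have h5 : M.toKMModel.force b (g m'.succPNat) :=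
              (ihb hb _ hkN).1 (H _ hkj ((iha ha _ hkN).2 h3))
            rw [hgk] at h5
            exact (sameTh b hb x (Y m') hTx').2 h5
        · intro H k hk hak
          have hkN : (k : ℕ) ≤ N + 1 := le_trans ((PNat.coe_le_coe k j).2 hk) hj
          have hidx : (k : ℕ) - 1 ≤ (j : ℕ) - 1 :=
            Nat.sub_le_sub_right ((PNat.coe_le_coe k j).2 hk) 1
          have hfa := (iha ha k hkN).1 hak
          rcases hweak ((k : ℕ) - 1) ((j : ℕ) - 1) hidx (by omega) with he | hr
          · have hgg : g j = g k := by rw [gval k hkN, gval j hj, he]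
            exact (ihb hb k hkN).2 (H (g k) (Or.inl hgg) hfa)
          · have hrr : M.R (g j) (g k) := by rw [gval j hj, gval k hkN]; exact hr
            exact (ihb hb k hkN).2 (H (g k) (Or.inr hrr) hfa)
    | iimp a b iha ihb =>
        intro hmem j hj
        obtain ⟨ha, hb⟩ := subf_iimp hmem
        constructor
        · intro H x hx hax
          have hxF : x ∈ Fut M w := Fut_up M w (gFut j) hx
          obtain ⟨m, hmN, hTx⟩ := hcover x hxF
          have hx' : M.R (Y ((j : ℕ) - 1)) x := by rw [← gval j hj]; exact hx
          have hne : Th M (subf φ) x ≠ Th M (subf φ) (Y ((j : ℕ) - 1)) :=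
            yy_max M w (subf φ) ((j : ℕ) - 1) x hx'
          have hsub : Th M (subf φ) (Y ((j : ℕ) - 1)) ⊆ Th M (subf φ) x :=
            Th_mono M (subf φ) hx'
          have hlt : m < (j : ℕ) - 1 := by
            by_contra hge
            push_neg at hge
            apply hne
            refine Finset.Subset.antisymm ?_ hsub
            rw [hTx]
            exact hmono hge
          have hkN : ((m.succPNat : ℕ+) : ℕ) ≤ N + 1 := by
            rw [Nat.succPNat_coe]; omega
          have hkj : m.succPNat < j := by
            rw [← PNat.coe_lt_coe, Nat.succPNat_coe]
            have hjpos : 0 < (j : ℕ) := j.2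
            show m.succ < (j : ℕ)
            omega
          have hgk : g m.succPNat = Y m := by
            rw [gval _ hkN, Nat.succPNat_coe, Nat.succ_sub_one]
          have h3 : M.toKMModel.force a (g m.succPNat) := by
            rw [hgk]
            exact (sameTh a ha x (Y m) hTx).1 hax
          have h5 : M.toKMModel.force b (g m.succPNat) :=
            (ihb hb _ hkN).1 (H _ hkj ((iha ha _ hkN).2 h3))
          rw [hgk] at h5
          exact (sameTh b hb x (Y m) hTx).2 h5
        · intro H k hk hak
          have hkco : (k : ℕ) < (j : ℕ) := (PNat.coe_lt_coe k j).2 hk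
          have hkN : (k : ℕ) ≤ N + 1 := by omega
          have hidx : (k : ℕ) - 1 < (j : ℕ) - 1 := by
            have hkpos : 0 < (k : ℕ) := k.2
            omega
          have hr := hR ((k : ℕ) - 1) ((j : ℕ) - 1) hidx (by omega)
          have hrr : M.R (g j) (g k) := by rw [gval j hj, gval k hkN]; exact hr
          exact (ihb hb k hkN).2 (H (g k) hrr ((iha ha k hkN).1 hak))
    | later a iha =>
        intro hmem j hj
        have ha := subf_later hmem
        constructor
        · intro H x hx
          have hxF : x ∈ Fut M w := Fut_up M w (gFut j) hx
          obtain ⟨m, hmN, hTx⟩ := hcover x hxF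
          have hx' : M.R (Y ((j : ℕ) - 1)) x := by rw [← gval j hj]; exact hx
          have hne : Th M (subf φ) x ≠ Th M (subf φ) (Y ((j : ℕ) - 1)) :=
            yy_max M w (subf φ) ((j : ℕ) - 1) x hx'
          have hsub : Th M (subf φ) (Y ((j : ℕ) - 1)) ⊆ Th M (subf φ) x :=
            Th_mono M (subf φ) hx'
          have hlt : m < (j : ℕ) - 1 := by
            by_contra hge
            push_neg at hge
            apply hne
            refine Finset.Subset.antisymm ?_ hsub
            rw [hTx]
            exact hmono hge
          have hkN : ((m.succPNat : ℕ+) : ℕ) ≤ N + 1 := by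
            rw [Nat.succPNat_coe]; omega
          have hkj : m.succPNat < j := by
            rw [← PNat.coe_lt_coe, Nat.succPNat_coe]
            have hjpos : 0 < (j : ℕ) := j.2
            show m.succ < (j : ℕ)
            omega
          have hgk : g m.succPNat = Y m := by
            rw [gval _ hkN, Nat.succPNat_coe, Nat.succ_sub_one]
          have h3 : M.toKMModel.force a (g m.succPNat) := (iha ha _ hkN).1 (H _ hkj)
          rw [hgk] at h3
          exact (sameTh a ha x (Y m) hTx).2 h3
        · intro H k hk
          have hkco : (k : ℕ) < (j : ℕ) := (PNat.coe_lt_coe k j).2 hk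
          have hkN : (k : ℕ) ≤ N + 1 := by omega
          have hidx : (k : ℕ) - 1 < (j : ℕ) - 1 := by
            have hkpos : 0 < (k : ℕ) := k.2
            omega
          have hr := hR ((k : ℕ) - 1) ((j : ℕ) - 1) hidx (by omega)
          have hrr : M.R (g j) (g k) := by rw [gval j hj, gval k hkN]; exact hr
          exact (iha ha k hkN).2 (H (g k) hrr)
  -- conclude
  have hfin := h η ηcl ⟨N + 1, Nat.succ_pos N⟩
  have hle : ((⟨N + 1, Nat.succ_pos N⟩ : ℕ+) : ℕ) ≤ N + 1 := le_rfl
  have h2 := (main φ (subf_self φ) _ hle).1 hfin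
  have h3 : g ⟨N + 1, Nat.succ_pos N⟩ = Y N := by
    rw [gval _ hle]
    congr 1
  rw [h3] at h2
  exact (sameTh φ (subf_self φ) (Y N) w hN).1 h2

end AuxProof

/-- internal validity in the topos of trees coincides with LC⊳-validity. -/
theorem topos_of_trees_iff_LC (φ : Fm) :
    (∀ η : ℕ → ℕ+ → Prop,
        (∀ p (j k : ℕ+), k ≤ j → η p j → η p k) → ∀ j : ℕ+, wforce η φ j)
      ↔ LCValid φ :=
  ⟨omega_to_LC φ, LC_to_omega φ⟩
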